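/- Let k be a positive integer with gcd(k, 6) = 1. If x is a rational number whose denominator in lowest terms is k, then the denominator in lowest terms of T(x) is also k; that is, T maps D_k into D_k. -/

import Mathlib

/-- The `3x+1` function on rationals: `T x = x/2` if the numerator of `x` is even,
and `T x = (3x+1)/2` if the numerator of `x` is odd. -/
noncomputable def T (x : ℚ) : ℚ := if Even x.num then x / 2 else (3 * x + 1) / 2

/-- If `gcd(k,6) = 1` then `T` maps `D_k` (rationals with denominator `k` in lowest
terms) into `D_k`. -/
theorem stmt_1 (k : ℕ) (hk : 0 < k) (h6 : Nat.gcd k 6 = 1)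
    (x : ℚ) (hx : x.den = k) : (T x).den = k := by
  have hco : Nat.Coprime x.num.natAbs k := hx ▸ x.reduced
  have hk0 : (0:ℤ) < (k:ℤ) := by exact_mod_cast hk
  have hk2 : Nat.Coprime k 2 := Nat.Coprime.coprime_dvd_right (by norm_num) h6
  have hk3 : Nat.Coprime k 3 := Nat.Coprime.coprime_dvd_right (by norm_num) h6
  have hxeq : x = (x.num : ℚ) / (x.den : ℚ) := (Rat.num_div_den x).symm
  unfold T
  by_cases hn : Even x.num
  · obtain ⟨m, hm⟩ := hn
    have heq : x / 2 = (m : ℚ) / (k : ℚ) := by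
      rw [hxeq, hx, hm]
      have : ((k:ℚ)) ≠ 0 := by positivity
      field_simp
      push_cast; ring
    rw [if_pos ⟨m, hm⟩, heq]
    have hdvd : m.natAbs ∣ x.num.natAbs :=
      Int.natAbs_dvd_natAbs.mpr ⟨2, by omega⟩
    have hcop : Nat.Coprime m.natAbs k := Nat.Coprime.coprime_dvd_left hdvd hco
    have := Rat.den_div_eq_of_coprime hk0 (by simpa using hcop)
    exact_mod_cast this
  · rw [if_neg hn]
    have hnodd : Odd x.num := Int.not_even_iff_odd.mp hn
    have hkodd : Odd (k:ℤ) := by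
      rcases Int.even_or_odd (k:ℤ) with he | ho
      · exfalso
        obtain ⟨t, ht⟩ := he
        have : 2 ∣ k := by
          have : (2:ℤ) ∣ (k:ℤ) := ⟨t, by omega⟩
          exact_mod_cast this
        have h2g : 2 ∣ Nat.gcd k 2 := Nat.dvd_gcd this dvd_rfl
        rw [hk2] at h2g; omega
      · exact ho
    have heven : Even (3 * x.num + (k:ℤ)) := by
      obtain ⟨a, ha⟩ := hnodd; obtain ⟨b, hb⟩ := hkodd
      exact ⟨3*a + b + 2, by omega⟩
    obtain ⟨m, hm⟩ := heven
    have heq : (3 * x + 1) / 2 = (m : ℚ) / (k : ℚ) := by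
      rw [hxeq, hx]
      have hkq : ((k:ℚ)) ≠ 0 := by positivity
      field_simp
      have : (3 * x.num + (k:ℤ) : ℚ) = (m + m : ℚ) := by exact_mod_cast congrArg (Int.cast : ℤ → ℚ) hm
      push_cast at this ⊢
      linear_combination this
    rw [heq]
    -- coprimality of m with k
    have hIC : IsCoprime (3 * x.num + (k:ℤ)) (k:ℤ) := by
      have h1 : IsCoprime (x.num) (k:ℤ) := by
        rw [Int.isCoprime_iff_gcd_eq_one]; simpa [Int.gcd] using hco
      have h3 : IsCoprime (3:ℤ) (k:ℤ) := by
        rw [Int.isCoprime_iff_gcd_eq_one]; simpa [Int.gcd, Nat.coprime_comm] using hk3.symm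
      have h31 := (h3.mul_left h1).add_mul_left_left 1
      simpa using h31
    have hmdvd : m ∣ 3 * x.num + (k:ℤ) := ⟨2, by omega⟩
    have hICm : IsCoprime m (k:ℤ) := hIC.of_isCoprime_of_dvd_left hmdvd
    have hcop : Nat.Coprime m.natAbs (k:ℤ).natAbs := Int.isCoprime_iff_gcd_eq_one.mp hICm
    have := Rat.den_div_eq_of_coprime hk0 hcop
    exact_mod_cast this
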